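/- For every σ ∈ Θ_r: B(T_r(σ)) = T_r(σ̄), where σ̄ is obtained from σ ∈ Υ_r by replacing every ∧ by ∨ and every ∨ by ∧, and ᾱ = ω, ω̄ = α. -/

import Mathlib

/-- The ground set `[n] = {1, …, n}` as a finset of naturals. -/
def ground (n : ℕ) : Finset ℕ := Finset.Icc 1 n

/-- The nested condition `j ∈ e σ₁ (j+1 ∈ e σ₂ (⋯))` determined by a sequence `σ`
over `{∧, ∨}` (where `false` encodes `∧` and `true` encodes `∨`). -/
def setCond (e : Finset ℕ) : ℕ → List Bool → Bool
  | j, [] => decide (j ∈ e)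
  | j, false :: s => decide (j ∈ e) && setCond e (j + 1) s
  | j, true :: s => decide (j ∈ e) || setCond e (j + 1) s

/-- `Θ_r = Υ_r ∪ {α, ω}` (elements of `Υ_r` are sequences over `{∧, ∨}`, with
`false` encoding `∧` and `true` encoding `∨`). -/
inductive Theta where
  | alpha : Theta
  | seq (σ : List Bool) : Theta
  | omega : Theta

/-- Membership in `Θ_r`: a sequence must contain fewer than `r` symbols `∧`
and fewer than `r` symbols `∨`. -/
def Theta.valid (r : ℕ) : Theta → Prop
  | .seq σ => σ.count false < r ∧ σ.count true < r
  | _ => True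

/-- `T_r(σ)` for `σ ∈ Θ_r`: the `r`-subsets of `[n]` satisfying the nested condition
given by `σ`; `T_r(α) = ∅` and `T_r(ω) = the family of all r-subsets of [n]`. -/
def Theta.Tset (n r : ℕ) : Theta → Finset (Finset ℕ)
  | .alpha => ∅
  | .seq σ => (Finset.powersetCard r (ground n)).filter (fun e => setCond e 1 σ = true)
  | .omega => Finset.powersetCard r (ground n)

/-- Encode the symbols for the lexicographic comparison: `∧ ↦ 0`, `* ↦ 1`, `∨ ↦ 2`. -/
def symCode (b : Bool) : ℕ := if b then 2 else 0

/-- The order on `Θ_r`: `α` is minimal, `ω` is maximal, and sequences are compared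
lexicographically after appending `*`, with `∧ < * < ∨`. -/
def Theta.lt : Theta → Theta → Prop
  | _, .alpha => False
  | .alpha, _ => True
  | .omega, _ => False
  | _, .omega => True
  | .seq σ, .seq τ => List.Lex (· < ·) (σ.map symCode ++ [1]) (τ.map symCode ++ [1])

/-- The position of an element of `Θ_r` in the linear order on `Θ_r`
(the number of elements of `Θ_r` strictly below it; `α` has position `0`). -/
noncomputable def Theta.posOf (r : ℕ) (t : Theta) : ℕ :=
  Set.ncard {x : Theta | x.valid r ∧ x.lt t}

/-- The blocker `B(F)`: the `r`-subsets of `[n]` meeting every member of `F`. -/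
def blockerT (n r : ℕ) (F : Finset (Finset ℕ)) : Finset (Finset ℕ) :=
  (Finset.powersetCard r (ground n)).filter (fun e => ∀ f ∈ F, (e ∩ f).Nonempty)

/-- `σ̄`: interchange `∧` and `∨`; `ᾱ = ω` and `ω̄ = α`. -/
def Theta.bar : Theta → Theta
  | .alpha => .omega
  | .seq σ => .seq (σ.map not)
  | .omega => .alpha


lemma disj_of_setCond (e f : Finset ℕ) : ∀ (s : List Bool) (j : ℕ),
    setCond e j (s.map not) = true → setCond f j s = true → (e ∩ f).Nonempty := by
  intro s
  induction s with
  | nil =>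
    intro j he hf
    simp [setCond] at he hf
    exact ⟨j, Finset.mem_inter.2 ⟨he, hf⟩⟩
  | cons b t ih =>
    intro j he hf
    cases b <;> simp [setCond] at he hf
    · rcases he with he | he
      · exact ⟨j, Finset.mem_inter.2 ⟨he, hf.1⟩⟩
      · exact ih (j+1) he hf.2
    · rcases hf with hf | hf
      · exact ⟨j, Finset.mem_inter.2 ⟨he.1, hf⟩⟩
      · exact ih (j+1) he.2 hf

lemma exists_required (n : ℕ) : ∀ (s : List Bool) (j : ℕ) (e : Finset ℕ),
    1 ≤ j → j + s.length ≤ n → setCond e j (s.map not) = false →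
    ∃ R : Finset ℕ, R ⊆ ground n \ e ∧ R.card ≤ s.count false + 1 ∧
      ∀ f : Finset ℕ, R ⊆ f → setCond f j s = true := by
  intro s
  induction s with
  | nil =>
    intro j e hj hn he
    simp [setCond] at he
    refine ⟨{j}, ?_, by simp, fun f hf => ?_⟩
    · simp only [Finset.singleton_subset_iff, Finset.mem_sdiff, ground, Finset.mem_Icc]
      exact ⟨⟨hj, by omega⟩, he⟩
    · have : j ∈ f := hf (by simp)
      simp [setCond, this]
  | cons b t ih =>
    intro j e hj hn e_he
    cases b
    · -- b = false (∧): bar is true (∨); need j and recurse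
      simp only [List.map, Bool.not_false, setCond, Bool.or_eq_false_iff,
        decide_eq_false_iff_not] at e_he
      obtain ⟨hje, hrest⟩ := e_he
      obtain ⟨R, hR1, hR2, hR3⟩ := ih (j+1) e (by omega)
        (by simp at hn ⊢; omega) hrest
      refine ⟨insert j R, ?_, ?_, fun f hf => ?_⟩
      · intro x hx
        rcases Finset.mem_insert.1 hx with rfl | hx
        · simp only [Finset.mem_sdiff, ground, Finset.mem_Icc]
          refine ⟨⟨hj, ?_⟩, hje⟩
          simp at hn; omega
        · exact hR1 hx
      · calc (insert j R).card ≤ R.card + 1 := Finset.card_insert_le _ _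
          _ ≤ t.count false + 1 + 1 := by omega
          _ = (false :: t).count false + 1 := by simp [List.count_cons]
      · have h1 : j ∈ f := hf (Finset.mem_insert_self _ _)
        have h2 : setCond f (j+1) t = true :=
          hR3 f ((Finset.subset_insert _ _).trans hf)
        simp [setCond, h1, h2]
    · -- b = true (∨): bar is false (∧)
      simp only [List.map, Bool.not_true, setCond, Bool.and_eq_false_iff,
        decide_eq_false_iff_not] at e_he
      rcases e_he with hje | hrest
      · refine ⟨{j}, ?_, ?_, fun f hf => ?_⟩
        · simp only [Finset.singleton_subset_iff, Finset.mem_sdiff, ground, Finset.mem_Icc]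
          refine ⟨⟨hj, ?_⟩, hje⟩
          simp at hn; omega
        · simp
        · have : j ∈ f := hf (by simp)
          simp [setCond, this]
      · obtain ⟨R, hR1, hR2, hR3⟩ := ih (j+1) e (by omega)
          (by simp at hn ⊢; omega) hrest
        refine ⟨R, hR1, ?_, fun f hf => ?_⟩
        · calc R.card ≤ t.count false + 1 := hR2
            _ ≤ (true :: t).count false + 1 := by simp [List.count_cons]
        · have h2 := hR3 f hf
          simp [setCond, h2]

lemma count_len (s : List Bool) : s.count false + s.count true = s.length := by
  induction s with
  | nil => rfl
  | cons b t ih => cases b <;> simp [List.count_cons] <;> omega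

theorem stmt17 (r n : ℕ) (hr : 1 ≤ r) (hn : 2 * r ≤ n)
    (σ : Theta) (hσ : σ.valid r) :
    blockerT n r (σ.Tset n r) = σ.bar.Tset n r := by
  cases σ with
  | alpha =>
    show blockerT n r ∅ = _
    unfold blockerT
    simp [Theta.bar, Theta.Tset]
  | omega =>
    show blockerT n r (Finset.powersetCard r (ground n)) = (∅ : Finset (Finset ℕ))
    apply Finset.eq_empty_of_forall_notMem
    intro e he
    rw [blockerT, Finset.mem_filter, Finset.mem_powersetCard] at he
    obtain ⟨⟨hsub, hcard⟩, hblock⟩ := he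
    have hcardg : (ground n).card = n := by simp [ground]
    have hle : r ≤ (ground n \ e).card := by
      rw [Finset.card_sdiff_of_subset hsub, hcardg, hcard]; omega
    obtain ⟨f, hf, hfcard⟩ := Finset.exists_subset_card_eq hle
    obtain ⟨x, hx⟩ := hblock f
      (Finset.mem_powersetCard.2 ⟨hf.trans Finset.sdiff_subset, hfcard⟩)
    have hx' := Finset.mem_inter.1 hx
    have := hf hx'.2
    rw [Finset.mem_sdiff] at this
    exact this.2 hx'.1
  | seq s =>
    obtain ⟨hf0, ht0⟩ := hσ
    ext e
    rw [blockerT, Finset.mem_filter]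
    simp only [Theta.bar, Theta.Tset, blockerT, Finset.mem_filter]
    constructor
    · rintro ⟨hep, hblock⟩
      refine ⟨hep, ?_⟩
      by_contra hcond
      rw [Bool.not_eq_true] at hcond
      obtain ⟨hsub, hcard⟩ := Finset.mem_powersetCard.1 hep
      have hlen : 1 + s.length ≤ n := by
        have := count_len s; omega
      obtain ⟨R, hR1, hR2, hR3⟩ := exists_required n s 1 e le_rfl hlen hcond
      have hRr : R.card ≤ r := by omega
      have hb : r ≤ (ground n \ e).card := by
        rw [Finset.card_sdiff_of_subset hsub, hcard]
        simp [ground]; omega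
      obtain ⟨f, hRf, hfsub, hfcard⟩ := Finset.exists_subsuperset_card_eq hR1 hRr hb
      obtain ⟨x, hx⟩ := hblock f
        ⟨Finset.mem_powersetCard.2 ⟨hfsub.trans Finset.sdiff_subset, hfcard⟩, hR3 f hRf⟩
      have hx' := Finset.mem_inter.1 hx
      have := hfsub hx'.2
      rw [Finset.mem_sdiff] at this
      exact this.2 hx'.1
    · rintro ⟨hep, hcond⟩
      exact ⟨hep, fun f hf => disj_of_setCond e f s 1 hcond hf.2⟩
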